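/- Let (x_n)_{n≥0} be a sequence with x_0 = 0 and x_n > 0 for n ≥ 1, set x_n! = x_1⋯x_n (x_0! = 1), and suppose N(u) = Σ_{n} u^n/x_n! converges for 0 ≤ u < R². Fix η ∈ (0,1) and let (p_s(η))_{s≥0} be real numbers such that Σ_{s=0}^∞ p_s(η) u^s/x_s! = N(u)/N(ηu) for all u ∈ [0,R²), the series converging absolutely. Then for every n ∈ ℕ and u ∈ (0,R²): Σ_{m=n}^∞ [x_m!/(x_{m-n}! x_n!)] η^n p_{m-n}(η) · u^m/(N(u) x_m!) = (ηu)^n/(N(ηu) x_n!). That is, the deformed Bernoulli transform of the deformed Poisson distribution with parameter u is the deformed Poisson distribution with parameter ηu. -/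

import Mathlib

/-- Deformed Bernoulli transform of the deformed Poisson distribution.
Let `x_0 = 0`, `x_n > 0` for `n ≥ 1`, `x_n! = x_1 ⋯ x_n` (encoded by `xf`),
and suppose `N(u) = Σ_n u^n/x_n!` converges on `[0,R²)`.  Fix `η ∈ (0,1)`
and polynomials values `p_s = p_s(η)` generated by
`Σ_s p_s u^s/x_s! = N(u)/N(ηu)` (absolutely convergent on `[0,R²)`).
Then for every `n` and `u ∈ (0,R²)`,
`Σ_{m≥n} [x_m!/(x_{m-n}! x_n!)] η^n p_{m-n} · u^m/(N(u) x_m!)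
  = (ηu)^n/(N(ηu) x_n!)`
(here the sum is written with `m = n + s`): imperfect detection amounts
to rescaling `α → √η α`. -/
theorem deformed_bernoulli_transform
    (R2 : ℝ) (hR2 : 0 < R2)
    (x : ℕ → ℝ) (hx0 : x 0 = 0) (hx : ∀ n, 1 ≤ n → 0 < x n)
    (xf : ℕ → ℝ) (hxf0 : xf 0 = 1) (hxf : ∀ n, xf (n + 1) = xf n * x (n + 1))
    (hconv : ∀ u ∈ Set.Ico (0:ℝ) R2, Summable (fun n : ℕ => u ^ n / xf n))
    (η : ℝ) (hη : η ∈ Set.Ioo (0:ℝ) 1)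
    (p : ℕ → ℝ)
    (hpconv : ∀ u ∈ Set.Ico (0:ℝ) R2, Summable (fun s : ℕ => p s * u ^ s / xf s))
    (hgen : ∀ u ∈ Set.Ico (0:ℝ) R2,
      ∑' s : ℕ, p s * u ^ s / xf s
        = (∑' n : ℕ, u ^ n / xf n) / (∑' n : ℕ, (η * u) ^ n / xf n)) :
    ∀ n : ℕ, ∀ u ∈ Set.Ioo (0:ℝ) R2,
      ∑' s : ℕ, (xf (n + s) / (xf s * xf n)) * η ^ n * p s *
          (u ^ (n + s) / ((∑' k : ℕ, u ^ k / xf k) * xf (n + s)))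
        = (η * u) ^ n / ((∑' k : ℕ, (η * u) ^ k / xf k) * xf n) := by
  intro n u hu
  obtain ⟨hu0, huR⟩ := hu
  obtain ⟨hη0, hη1⟩ := hη
  -- positivity of xf
  have hxfpos : ∀ m, 0 < xf m := by
    intro m
    induction m with
    | zero => simp [hxf0]
    | succ k ih => rw [hxf]; exact mul_pos ih (hx (k+1) (Nat.le_add_left 1 k))
  have huIco : u ∈ Set.Ico (0:ℝ) R2 := ⟨le_of_lt hu0, huR⟩
  have hηu0 : 0 < η * u := mul_pos hη0 hu0
  have hηuR : η * u < R2 := lt_trans (by nlinarith) huR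
  have hηuIco : η * u ∈ Set.Ico (0:ℝ) R2 := ⟨le_of_lt hηu0, hηuR⟩
  set Nu := ∑' k : ℕ, u ^ k / xf k with hNu
  set Nv := ∑' k : ℕ, (η * u) ^ k / xf k with hNv
  -- N(u) ≥ 1 > 0
  have hNpos : ∀ w : ℝ, w ∈ Set.Ico (0:ℝ) R2 → 0 < ∑' k : ℕ, w ^ k / xf k := by
    intro w hw
    have h1 : (1:ℝ) ≤ ∑' k : ℕ, w ^ k / xf k := by
      have hw0 : (0:ℝ) ≤ w := hw.1
      have := Summable.le_tsum (hconv w hw) 0 (fun m _ =>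
        div_nonneg (pow_nonneg hw0 m) (hxfpos m).le)
      simpa [hxf0] using this
    linarith
  have hNu0 : 0 < Nu := hNpos u huIco
  have hNv0 : 0 < Nv := hNpos (η * u) hηuIco
  -- rewrite each term
  have hterm : ∀ s : ℕ,
      (xf (n + s) / (xf s * xf n)) * η ^ n * p s *
          (u ^ (n + s) / (Nu * xf (n + s)))
        = (η ^ n * u ^ n / (Nu * xf n)) * (p s * u ^ s / xf s) := by
    intro s
    have h1 := (hxfpos (n + s)).ne'
    have h2 := (hxfpos s).ne'
    have h3 := (hxfpos n).ne'
    have h4 := hNu0.ne'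
    rw [pow_add]
    field_simp
  rw [tsum_congr hterm, tsum_mul_left, hgen u huIco, ← hNu, ← hNv]
  rw [mul_pow]
  field_simp
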